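/- Magri–Lenard commutativity: let R be a commutative ℂ-algebra with two compatible Poisson brackets {·,·}_1 and {·,·}_2 (i.e., every linear combination is a Poisson bracket). If a lies in the Poisson center of R with respect to {·,·}_1 + t_1{·,·}_2 and b lies in the Poisson center with respect to {·,·}_1 + t_2{·,·}_2 for distinct t_1 ≠ t_2 ∈ ℂ, then {a,b}_1 = {a,b}_2 = 0. -/
import Mathlib

/-- A bilinear map is a Poisson bracket on a commutative algebra `R` if it is a
Lie bracket (alternating and satisfying the Jacobi identity) and a biderivation
(Leibniz rule in each argument; one suffices by antisymmetry). -/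
def IsPoissonBracket {R : Type*} [CommRing R] [Algebra ℂ R]
    (br : R →ₗ[ℂ] R →ₗ[ℂ] R) : Prop :=
  (∀ x, br x x = 0) ∧
  (∀ x y z, br x (br y z) + br y (br z x) + br z (br x y) = 0) ∧
  (∀ x y z, br x (y * z) = y * br x z + br x y * z)

lemma bracket_antisymm {R : Type*} [CommRing R] [Algebra ℂ R]
    (br : R →ₗ[ℂ] R →ₗ[ℂ] R) (halt : ∀ x, br x x = 0) (x y : R) :
    br x y = - br y x := by
  have h := halt (x + y)
  simp only [map_add, LinearMap.add_apply, halt x, halt y] at h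
  linear_combination h

/-- Magri–Lenard commutativity: let `{·,·}_1, {·,·}_2` be two
compatible Poisson brackets on a commutative ℂ-algebra `R` (every linear
combination is again a Poisson bracket).  If `a` is in the Poisson center of
`{·,·}_1 + t₁{·,·}_2` and `b` is in the Poisson center of `{·,·}_1 + t₂{·,·}_2`
with `t₁ ≠ t₂`, then `{a,b}_1 = {a,b}_2 = 0`. -/
theorem magri_lenard {R : Type*} [CommRing R] [Algebra ℂ R]
    (br₁ br₂ : R →ₗ[ℂ] R →ₗ[ℂ] R)
    (h₁ : IsPoissonBracket br₁) (h₂ : IsPoissonBracket br₂)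
    (hcompat : ∀ s t : ℂ, IsPoissonBracket (s • br₁ + t • br₂))
    (t₁ t₂ : ℂ) (hne : t₁ ≠ t₂) (a b : R)
    (ha : ∀ r : R, br₁ a r + t₁ • br₂ a r = 0)
    (hb : ∀ r : R, br₁ b r + t₂ • br₂ b r = 0) :
    br₁ a b = 0 ∧ br₂ a b = 0 := by
  have hA := ha b
  have hB := hb a
  rw [bracket_antisymm br₁ h₁.1 b a, bracket_antisymm br₂ h₂.1 b a] at hB
  -- hB : -br₁ a b + t₂ • (-br₂ a b) = 0
  have hsum : (t₁ - t₂) • br₂ a b = 0 := by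
    have := congrArg (· + ·) hA
    rw [sub_smul]
    rw [smul_neg] at hB
    have h3 : (br₁ a b + t₁ • br₂ a b) + (-br₁ a b + -(t₂ • br₂ a b)) = 0 := by
      rw [hA, hB]; ring
    calc t₁ • br₂ a b - t₂ • br₂ a b
        = (br₁ a b + t₁ • br₂ a b) + (-br₁ a b + -(t₂ • br₂ a b)) := by ring
      _ = 0 := h3
  have h2 : br₂ a b = 0 := by
    have hne' : t₁ - t₂ ≠ 0 := sub_ne_zero.mpr hne
    have := congrArg (fun x => (t₁ - t₂)⁻¹ • x) hsum
    simpa [smul_smul, inv_mul_cancel₀ hne'] using this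
  refine ⟨?_, h2⟩
  have := hA
  rw [h2, smul_zero, add_zero] at this
  exact this
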